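/- (Optimal discriminatory reward, Eq. (6)) Under Assumption 1 and with μ > 0, t > 0, s > 0, the matrix 2I + 2μtK is invertible, and the reward vector r* = (2I + 2μtK)^{-1}{ μ[s·1 − 2tK(a − c·1)] − (a − c·1) } is a global maximizer of the discriminatory-reward revenue Π(r) = μ(s·1ᵀx − t·xᵀx) − rᵀx with x = K(a + r − c·1); that is, Π(r) ≤ Π(r*) for all r ∈ ℝ^N. -/

import Mathlib

open scoped Matrix

lemma posdef_aux (N : ℕ) (b : Fin N → ℝ)
    (G : Matrix (Fin N) (Fin N) ℝ)
    (hGsym : ∀ i j, G i j = G j i)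
    (hGnonneg : ∀ i j, 0 ≤ G i j)
    (hA : ∀ i, ∑ j, G i j < 2 * b i) :
    (Matrix.diagonal (fun i => 2 * b i) - G).PosDef := by
  rw [Matrix.posDef_iff_dotProduct_mulVec]
  constructor
  · ext i j
    simp [Matrix.conjTranspose_apply, Matrix.diagonal_apply, hGsym i j]
    by_cases h : i = j <;> simp [h, eq_comm]
  · intro x hx
    obtain ⟨k, hk⟩ := Function.ne_iff.mp hx
    have hquad : (star x) ⬝ᵥ ((Matrix.diagonal (fun i => 2 * b i) - G) *ᵥ x)
        = ∑ i, 2 * b i * x i ^ 2 - ∑ i, ∑ j, G i j * (x i * x j) := by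
      simp only [star_trivial, dotProduct, Matrix.mulVec, Matrix.sub_apply,
        Matrix.diagonal_apply, dotProduct, sub_mul, Finset.sum_sub_distrib,
        Finset.mul_sum, mul_sub]
      congr 1
      · congr 1; funext i
        simp [ite_mul, mul_ite, Finset.sum_ite_eq]; ring
      · congr 1; funext i
        congr 1; funext j
        ring
    rw [hquad]
    have hbound : ∑ i, ∑ j, G i j * (x i * x j) ≤ ∑ i, (∑ j, G i j) * x i ^ 2 := by
      have h1 : ∀ i j : Fin N, G i j * (x i * x j) ≤ G i j * ((x i ^ 2 + x j ^ 2) / 2) := by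
        intro i j
        apply mul_le_mul_of_nonneg_left _ (hGnonneg i j)
        nlinarith [sq_nonneg (x i - x j)]
      calc ∑ i, ∑ j, G i j * (x i * x j)
          ≤ ∑ i, ∑ j, G i j * ((x i ^ 2 + x j ^ 2) / 2) :=
            Finset.sum_le_sum fun i _ => Finset.sum_le_sum fun j _ => h1 i j
        _ = ∑ i, (∑ j, G i j) * x i ^ 2 := by
            have hswap : ∑ i, ∑ j, G i j * (x j ^ 2 / 2) = ∑ i, ∑ j, G i j * (x i ^ 2 / 2) := by
              rw [Finset.sum_comm]
              congr 1; funext i; congr 1; funext j; rw [hGsym]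
            simp only [mul_div_assoc, mul_add, Finset.sum_add_distrib, add_div]
            rw [hswap, ← Finset.sum_add_distrib]
            congr 1; funext i
            rw [← Finset.sum_add_distrib, Finset.sum_mul]
            congr 1; funext j; ring
    have hpos : 0 < ∑ i, (2 * b i - ∑ j, G i j) * x i ^ 2 := by
      have hk' : x k ≠ 0 := by simpa using hk
      apply Finset.sum_pos'
      · intro i _
        exact mul_nonneg (by linarith [hA i]) (sq_nonneg _)
      · exact ⟨k, Finset.mem_univ k,
          mul_pos (by linarith [hA k])
            (lt_of_le_of_ne (sq_nonneg _) (Ne.symm (pow_ne_zero 2 hk')))⟩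
    have : ∑ i, (2 * b i - ∑ j, G i j) * x i ^ 2
        = ∑ i, 2 * b i * x i ^ 2 - ∑ i, (∑ j, G i j) * x i ^ 2 := by
      rw [← Finset.sum_sub_distrib]; congr 1; funext i; ring
    linarith

/-- Optimal discriminatory reward (Eq. (6)): `2I + 2μtK` is invertible and
`r* = (2I + 2μtK)⁻¹ { μ [s·1 − 2tK(a − c·1)] − (a − c·1) }` globally maximizes the
discriminatory-reward revenue. -/
theorem stmt8 (N : ℕ) (hN : 1 ≤ N)
    (a b : Fin N → ℝ) (c : ℝ) (hb : ∀ i, 0 < b i)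
    (G : Matrix (Fin N) (Fin N) ℝ)
    (hGsym : ∀ i j, G i j = G j i)
    (hGnonneg : ∀ i j, 0 ≤ G i j)
    (hGdiag : ∀ i, G i i = 0)
    (hA : ∀ i, ∑ j, G i j < 2 * b i)
    (B : Matrix (Fin N) (Fin N) ℝ)
    (hB : B = Matrix.diagonal (fun i => 2 * b i))
    (μ s t : ℝ) (hμ : 0 < μ) (hs : 0 < s) (ht : 0 < t)
    (K : Matrix (Fin N) (Fin N) ℝ) (hK : K = (B - G)⁻¹)
    (Rev : (Fin N → ℝ) → ℝ)
    (hRev : ∀ r : Fin N → ℝ,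
      Rev r = μ * (s * ∑ i, (K *ᵥ (fun j => a j + r j - c)) i
                  - t * ∑ i, ((K *ᵥ (fun j => a j + r j - c)) i) ^ 2)
              - ∑ i, r i * (K *ᵥ (fun j => a j + r j - c)) i)
    (M : Matrix (Fin N) (Fin N) ℝ)
    (hM : M = (2 : ℝ) • (1 : Matrix (Fin N) (Fin N) ℝ) + (2 * μ * t) • K)
    (rstar : Fin N → ℝ)
    (hrstar : rstar
      = M⁻¹ *ᵥ (fun i => μ * (s - 2 * t * (K *ᵥ (fun j => a j - c)) i) - (a i - c))) :
    IsUnit M ∧ ∀ r : Fin N → ℝ, Rev r ≤ Rev rstar := by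
  have hApd : (B - G).PosDef := hB ▸ posdef_aux N b G hGsym hGnonneg hA
  have hKpd : K.PosDef := hK ▸ hApd.inv
  have hKt : Kᵀ = K := by
    ext i j
    have := congrFun (congrFun hKpd.isHermitian i) j
    simpa using this
  -- M is positive definite
  have hMpd : M.PosDef := by
    rw [hM, Matrix.posDef_iff_dotProduct_mulVec]
    constructor
    · ext i j
      have hK' : K j i = K i j := congrFun (congrFun hKt i) j
      simp only [Matrix.conjTranspose_apply, Matrix.add_apply, Matrix.smul_apply,
        Matrix.one_apply, star_trivial, smul_eq_mul, hK']
      by_cases h : i = j <;> simp [h, eq_comm]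
    · intro x hx
      have h1 : 0 < (star x) ⬝ᵥ (((2:ℝ) • (1 : Matrix (Fin N) (Fin N) ℝ)) *ᵥ x) := by
        simp only [Matrix.smul_mulVec, Matrix.one_mulVec, dotProduct_smul,
          star_trivial, smul_eq_mul]
        have : 0 < x ⬝ᵥ x := by
          obtain ⟨k, hk⟩ := Function.ne_iff.mp hx
          have hk' : x k ≠ 0 := by simpa using hk
          apply Finset.sum_pos'
          · exact fun i _ => mul_self_nonneg _
          · exact ⟨k, Finset.mem_univ k, mul_self_pos.mpr hk'⟩
        linarith
      have h2 : 0 ≤ (star x) ⬝ᵥ (((2 * μ * t) • K) *ᵥ x) := by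
        simp only [Matrix.smul_mulVec, dotProduct_smul, smul_eq_mul]
        have := (hKpd.posSemidef.dotProduct_mulVec_nonneg x)
        have h0 : (0:ℝ) ≤ (star x) ⬝ᵥ (K *ᵥ x) := by simpa using this
        have : (0:ℝ) ≤ 2 * μ * t := by positivity
        exact mul_nonneg this (by simpa using h0)
      rw [Matrix.add_mulVec, dotProduct_add]
      exact add_pos_of_pos_of_nonneg h1 h2
  refine ⟨hMpd.isUnit, ?_⟩
  -- notation
  set d : Fin N → ℝ := fun j => a j - c with hd
  have harg : ∀ r : Fin N → ℝ, (fun j => a j + r j - c) = d + r := by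
    intro r; funext j; simp [hd]; ring
  set xs : Fin N → ℝ := K *ᵥ (d + rstar) with hxs
  -- symmetry of K as bilinear form
  have hsym : ∀ v w : Fin N → ℝ, v ⬝ᵥ (K *ᵥ w) = w ⬝ᵥ (K *ᵥ v) := by
    intro v w
    rw [Matrix.dotProduct_mulVec, ← Matrix.mulVec_transpose, hKt, dotProduct_comm]
  -- first-order condition
  have hMr : M *ᵥ rstar = fun i => μ * (s - 2 * t * (K *ᵥ d) i) - d i := by
    rw [hrstar, Matrix.mulVec_mulVec, Matrix.mul_nonsing_inv _ (hMpd.det_pos.ne'.isUnit),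
      Matrix.one_mulVec]
  have hfoc : (2:ℝ) • rstar + (2 * μ * t) • xs + d - (μ * s) • (fun _ => (1:ℝ)) = 0 := by
    funext i
    have h1 := congrFun hMr i
    rw [hM] at h1
    simp only [Matrix.add_mulVec, Matrix.smul_mulVec, Matrix.one_mulVec,
      Pi.add_apply, Pi.smul_apply, smul_eq_mul] at h1
    have h2 : xs i = (K *ᵥ d) i + (K *ᵥ rstar) i := by
      rw [hxs, Matrix.mulVec_add]; simp
    simp only [Pi.add_apply, Pi.sub_apply, Pi.smul_apply, Pi.zero_apply, smul_eq_mul, h2]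
    linarith [h1]
  -- main inequality
  intro r
  set e : Fin N → ℝ := r - rstar with he
  set u : Fin N → ℝ := K *ᵥ e with hu
  have hsplit : K *ᵥ (d + r) = xs + u := by
    rw [hxs, hu, ← Matrix.mulVec_add]
    congr 1
    funext j; simp [he]
  -- the FOC dotted with e
  have hz : e ⬝ᵥ (K *ᵥ ((2:ℝ) • rstar + (2 * μ * t) • xs + d - (μ * s) • (fun _ => (1:ℝ)))) = 0 := by
    rw [hfoc]; simp
  rw [Matrix.mulVec_sub, Matrix.mulVec_add, Matrix.mulVec_add, Matrix.mulVec_smul,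
    Matrix.mulVec_smul, Matrix.mulVec_smul, dotProduct_sub, dotProduct_add,
    dotProduct_add, dotProduct_smul, dotProduct_smul,
    dotProduct_smul] at hz
  simp only [smul_eq_mul] at hz
  -- rewrite Rev in dotProduct form
  have hRev' : ∀ r' : Fin N → ℝ,
      Rev r' = μ * (s * ((fun _ => (1:ℝ)) ⬝ᵥ (K *ᵥ (d + r')))
                 - t * ((K *ᵥ (d + r')) ⬝ᵥ (K *ᵥ (d + r'))))
             - r' ⬝ᵥ (K *ᵥ (d + r')) := by
    intro r'
    rw [hRev, harg]
    simp [dotProduct, sq]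
  have hRr : Rev r = μ * (s * ((fun _ => (1:ℝ)) ⬝ᵥ xs + (fun _ => (1:ℝ)) ⬝ᵥ u)
      - t * (xs ⬝ᵥ xs + xs ⬝ᵥ u + (u ⬝ᵥ xs + u ⬝ᵥ u)))
      - (rstar ⬝ᵥ xs + rstar ⬝ᵥ u + (e ⬝ᵥ xs + e ⬝ᵥ u)) := by
    rw [hRev' r, hsplit]
    have hre : r = rstar + e := by funext j; simp [he]
    rw [hre]
    simp only [dotProduct_add, add_dotProduct]
    rw [dotProduct_comm u xs]
    ring
  have hRs : Rev rstar = μ * (s * ((fun _ => (1:ℝ)) ⬝ᵥ xs) - t * (xs ⬝ᵥ xs)) - rstar ⬝ᵥ xs := by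
    rw [hRev' rstar]
  -- symmetry facts
  have s1 : (fun _ => (1:ℝ)) ⬝ᵥ u = e ⬝ᵥ (K *ᵥ (fun _ => (1:ℝ))) := by rw [hu, hsym]
  have s2 : xs ⬝ᵥ u = e ⬝ᵥ (K *ᵥ xs) := by rw [hu, hsym]
  have s3 : u ⬝ᵥ xs = e ⬝ᵥ (K *ᵥ xs) := by rw [dotProduct_comm, hu, hsym]
  have s4 : rstar ⬝ᵥ u = e ⬝ᵥ (K *ᵥ rstar) := by rw [hu, hsym]
  have s5 : e ⬝ᵥ xs = e ⬝ᵥ (K *ᵥ d) + e ⬝ᵥ (K *ᵥ rstar) := by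
    rw [hxs, Matrix.mulVec_add, dotProduct_add]
  -- the difference identity
  have hdiff : Rev rstar - Rev r = μ * t * (u ⬝ᵥ u) + e ⬝ᵥ u := by
    rw [hRr, hRs, s1, s2, s3, s4, s5]
    linear_combination hz
  have h1 : 0 ≤ u ⬝ᵥ u := Finset.sum_nonneg fun i _ => mul_self_nonneg _
  have h2 : 0 ≤ e ⬝ᵥ u := by
    by_cases hez : e = 0
    · simp [hez, hu]
    · have := hKpd.posSemidef.dotProduct_mulVec_nonneg e
      rw [hu]
      simpa using this
  have h3 : 0 ≤ μ * t * (u ⬝ᵥ u) := mul_nonneg (by positivity) h1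
  linarith [hdiff, h2, h3]
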